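/- Let r : ℝ → ℝ be four times continuously differentiable with bounded fourth derivative and bounded (so that the convolution is defined), and for ε > 0 let K_ε(x) = (1/(2ε)) e^{−|x|/ε}. Then for every x ∈ ℝ, |(K_ε * r)(x) − r(x) − ε^2 r''(x)| ≤ ε^4 · sup_{y∈ℝ} |r''''(y)|; in particular K_ε * r = r + ε^2 r'' + O(ε^3) uniformly as ε → 0. -/

import Mathlib

open MeasureTheory

open Set Real


private lemma iterWithin_eq {f : ℝ → ℝ} {n m : ℕ} (hf : ContDiff ℝ (n : ℕ) f) (hmn : m ≤ n)
    {s : Set ℝ} (hs : UniqueDiffOn ℝ s) {x : ℝ} (hx : x ∈ s) :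
    iteratedDerivWithin m f s x = iteratedDeriv m f x := by
  have h : HasFTaylorSeriesUpTo (n : ℕ) f (ftaylorSeries ℝ f) := by
    rw [← hasFTaylorSeriesUpToOn_univ_iff, ← ftaylorSeriesWithin_univ]
    exact (hf.contDiffOn (s := univ)).ftaylorSeriesWithin uniqueDiffOn_univ
  have h2 := (h.hasFTaylorSeriesUpToOn s).eq_iteratedFDerivWithin_of_uniqueDiffOn
      (by exact_mod_cast hmn) hs hx
  rw [iteratedDerivWithin_eq_iteratedFDerivWithin, iteratedDeriv_eq_iteratedFDeriv, ← h2]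
  rfl

private lemma taylor_pos {f : ℝ → ℝ} (hf : ContDiff ℝ 4 f) {M : ℝ}
    (hM : ∀ y, |iteratedDeriv 4 f y| ≤ M) {a b : ℝ} (hab : a < b) :
    |f b - (f a + iteratedDeriv 1 f a * (b - a) + iteratedDeriv 2 f a * (b - a) ^ 2 / 2
      + iteratedDeriv 3 f a * (b - a) ^ 3 / 6)| ≤ M * (b - a) ^ 4 / 24 := by
  have hf' : ContDiff ℝ ((4 : ℕ) : ℕ∞) f := by exact_mod_cast hf
  have husq := uniqueDiffOn_Icc hab
  have hcd : ContDiffOn ℝ 3 f (Icc a b) := (hf.of_le (by norm_num)).contDiffOn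
  have hdiff : DifferentiableOn ℝ (iteratedDerivWithin 3 f (Icc a b)) (Ioo a b) := by
    have hd : Differentiable ℝ (iteratedDeriv 3 f) :=
      hf.differentiable_iteratedDeriv 3 (by norm_num)
    refine hd.differentiableOn.congr fun y hy => ?_
    exact iterWithin_eq hf' (by norm_num) husq (Ioo_subset_Icc_self hy)
  obtain ⟨x', hx', hval⟩ := taylor_mean_remainder_lagrange (n := 3) hab.ne
    (by rw [Set.uIcc_of_le hab.le]; exact hcd)
    (by rw [Set.uIcc_of_le hab.le, Set.uIoo_of_le hab.le]; exact hdiff)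
  rw [Set.uIoo_of_le hab.le] at hx'
  rw [Set.uIcc_of_le hab.le] at hval
  have ha : a ∈ Icc a b := left_mem_Icc.mpr hab.le
  have expand : taylorWithinEval f 3 (Icc a b) a b
      = f a + iteratedDeriv 1 f a * (b - a) + iteratedDeriv 2 f a * (b - a) ^ 2 / 2
        + iteratedDeriv 3 f a * (b - a) ^ 3 / 6 := by
    rw [taylor_within_apply]
    have e0 := iterWithin_eq hf' (by norm_num : 0 ≤ 4) husq ha
    have e1 := iterWithin_eq hf' (by norm_num : 1 ≤ 4) husq ha
    have e2 := iterWithin_eq hf' (by norm_num : 2 ≤ 4) husq ha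
    have e3 := iterWithin_eq hf' (by norm_num : 3 ≤ 4) husq ha
    simp [Finset.sum_range_succ, e0, e1, e2, e3, iteratedDeriv_zero, Nat.factorial]
    ring
  have e4 := iterWithin_eq hf' (le_refl 4) husq (Ioo_subset_Icc_self hx')
  rw [expand, e4] at hval
  have h24 : ((Nat.factorial (3 + 1) : ℕ) : ℝ) = 24 := by norm_num [Nat.factorial]
  rw [h24] at hval
  rw [hval]
  have hb4 : (0:ℝ) ≤ (b - a) ^ 4 := by positivity
  rw [abs_div, abs_mul, abs_of_nonneg hb4, abs_of_nonneg (by norm_num : (0:ℝ) ≤ 24)]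
  gcongr
  exact hM x'

private lemma taylor_bound {f : ℝ → ℝ} (hf : ContDiff ℝ 4 f) {M : ℝ}
    (hM : ∀ y, |iteratedDeriv 4 f y| ≤ M) (a b : ℝ) :
    |f b - (f a + iteratedDeriv 1 f a * (b - a) + iteratedDeriv 2 f a * (b - a) ^ 2 / 2
      + iteratedDeriv 3 f a * (b - a) ^ 3 / 6)| ≤ M * (b - a) ^ 4 / 24 := by
  rcases lt_trichotomy a b with h | h | h
  · exact taylor_pos hf hM h
  · subst h
    simp
  · have hg : ContDiff ℝ 4 (fun t : ℝ => f (-t)) := hf.comp contDiff_neg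
    have hgM : ∀ y, |iteratedDeriv 4 (fun t : ℝ => f (-t)) y| ≤ M := by
      intro y
      rw [iteratedDeriv_comp_neg]
      norm_num
      exact hM (-y)
    have key := taylor_pos hg hgM (neg_lt_neg h)
    simp only [iteratedDeriv_comp_neg, neg_neg, smul_eq_mul] at key
    convert key using 2
    · ring
    · ring

private lemma integrable_abs_kernel {ε : ℝ} (hε : 0 < ε) (k : ℕ) :
    Integrable (fun t : ℝ => Real.exp (-|t| / ε) * |t| ^ k) := by
  have hIoi : IntegrableOn (fun t : ℝ => Real.exp (-|t| / ε) * |t| ^ k) (Ioi 0) := by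
    have h0 := integrableOn_rpow_mul_exp_neg_mul_rpow (s := (k : ℝ)) (p := 1) (b := 1 / ε)
      (by exact neg_one_lt_zero.trans_le (Nat.cast_nonneg k)) one_pos (by positivity)
    refine h0.congr_fun (fun t ht => ?_) measurableSet_Ioi
    dsimp only
    rw [Real.rpow_one, Real.rpow_natCast, abs_of_pos ht, show (-(1 / ε) * t : ℝ) = -t / ε by ring]
    ring
  have hIic : IntegrableOn (fun t : ℝ => Real.exp (-|t| / ε) * |t| ^ k) (Iic 0) := by
    rw [← Measure.map_neg_eq_self (volume : Measure ℝ)]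
    have m : MeasurableEmbedding fun x : ℝ => -x := (Homeomorph.neg ℝ).measurableEmbedding
    rw [m.integrableOn_map_iff]
    simp_rw [Function.comp_def, abs_neg, neg_preimage, neg_Iic, neg_zero]
    exact Iff.mpr integrableOn_Ici_iff_integrableOn_Ioi hIoi
  rw [← integrableOn_univ, ← Iic_union_Ioi (a := (0:ℝ))]
  exact hIic.union hIoi

private lemma moment_even {ε : ℝ} (hε : 0 < ε) (k : ℕ) :
    ∫ t : ℝ, Real.exp (-|t| / ε) * |t| ^ k = 2 * ((Nat.factorial k : ℝ) * ε ^ (k + 1)) := by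
  rw [integral_comp_abs (f := fun u => Real.exp (-u / ε) * u ^ k)]
  have h := integral_rpow_mul_exp_neg_mul_Ioi (a := (k : ℝ) + 1) (r := 1 / ε)
    (by positivity) (by positivity)
  simp only [add_sub_cancel_right] at h
  have hl : ∫ t in Ioi (0:ℝ), Real.exp (-t / ε) * t ^ k
      = ∫ t in Ioi (0:ℝ), t ^ (k : ℝ) * Real.exp (-(1 / ε * t)) := by
    refine setIntegral_congr_fun measurableSet_Ioi (fun t ht => ?_)
    rw [Real.rpow_natCast, show (-(1 / ε * t) : ℝ) = -t / ε by ring]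
    ring
  rw [hl, h, one_div_one_div, Real.Gamma_nat_eq_factorial,
    show ((k : ℝ) + 1) = ((k + 1 : ℕ) : ℝ) by push_cast; ring, Real.rpow_natCast]
  ring

private lemma moment_odd {ε : ℝ} {k : ℕ} (hk : Odd k) :
    ∫ t : ℝ, Real.exp (-|t| / ε) * t ^ k = 0 := by
  have h1 : ∫ t : ℝ, Real.exp (-|(-t)| / ε) * (-t) ^ k = ∫ t : ℝ, Real.exp (-|t| / ε) * t ^ k :=
    integral_neg_eq_self (fun t : ℝ => Real.exp (-|t| / ε) * t ^ k) volume
  have h2 : (fun t : ℝ => Real.exp (-|(-t)| / ε) * (-t) ^ k)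
      = fun t : ℝ => -(Real.exp (-|t| / ε) * t ^ k) := by
    funext t
    rw [abs_neg, hk.neg_pow]
    ring
  rw [h2, integral_neg] at h1
  linarith

/-- **Local expansion of the exponential convolution.** Let `r : ℝ → ℝ` be `C⁴`, bounded and
with bounded fourth derivative, and let `K_ε(x) = (1/(2ε)) e^{-|x|/ε}`. Then for every `x`,
`|(K_ε * r)(x) - r(x) - ε² r''(x)| ≤ ε⁴ · sup |r''''|`; in particular
`K_ε * r = r + ε² r'' + O(ε³)` uniformly as `ε → 0`. -/
theorem exponential_kernel_convolution_expansion (r : ℝ → ℝ) (hr : ContDiff ℝ 4 r)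
    (Mb : ℝ) (hMb : ∀ x, |r x| ≤ Mb)
    (M₄ : ℝ) (hM₄ : ∀ y, |iteratedDeriv 4 r y| ≤ M₄)
    (ε : ℝ) (hε : 0 < ε) (x : ℝ) :
    |(∫ y : ℝ, 1 / (2 * ε) * Real.exp (-|x - y| / ε) * r y)
        - r x - ε ^ 2 * iteratedDeriv 2 r x| ≤ ε ^ 4 * M₄ := by
  have hM0 : 0 ≤ M₄ := le_trans (abs_nonneg _) (hM₄ 0)
  set d1 := iteratedDeriv 1 r x with hd1
  set d2 := iteratedDeriv 2 r x with hd2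
  set d3 := iteratedDeriv 3 r x with hd3
  set K : ℝ → ℝ := fun t => 1 / (2 * ε) * Real.exp (-|t| / ε) with hK
  have hKpos : ∀ t, 0 ≤ K t := fun t => by positivity
  set P : ℝ → ℝ := fun t => r x + d1 * (-t) + d2 * (-t) ^ 2 / 2 + d3 * (-t) ^ 3 / 6 with hP
  -- change of variables
  have hsub : (∫ y : ℝ, 1 / (2 * ε) * Real.exp (-|x - y| / ε) * r y)
      = ∫ t : ℝ, K t * r (x - t) := by
    rw [← integral_sub_left_eq_self (fun y => 1 / (2 * ε) * Real.exp (-|x - y| / ε) * r y)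
      volume x]
    congr 1
    funext t
    simp only [hK, sub_sub_cancel]
  -- Taylor estimate
  have htay : ∀ t : ℝ, |r (x - t) - P t| ≤ M₄ * t ^ 4 / 24 := by
    intro t
    have h := taylor_bound hr hM₄ x (x - t)
    have e : x - t - x = -t := by ring
    rw [e] at h
    have e2 : M₄ * (-t) ^ 4 / 24 = M₄ * t ^ 4 / 24 := by ring
    rw [e2] at h
    simp only [hP]
    exact h
  -- integrability
  have base : ∀ k : ℕ, Integrable (fun t : ℝ => Real.exp (-|t| / ε) * |t| ^ k) :=
    fun k => integrable_abs_kernel hε k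
  have contr : Continuous r := hr.continuous
  have contK : Continuous K := by
    apply Continuous.mul continuous_const
    exact Real.continuous_exp.comp ((continuous_abs.neg).div_const ε)
  have i0 : Integrable K := by
    have := (base 0).const_mul (1 / (2 * ε))
    simpa [hK] using this
  have i1 : Integrable (fun t : ℝ => K t * t) := by
    refine Integrable.mono' (((base 1).const_mul (1 / (2 * ε)))) ?_ ?_
    · exact (contK.mul continuous_id).aestronglyMeasurable
    · refine Filter.Eventually.of_forall fun t => ?_
      rw [Real.norm_eq_abs, abs_mul, abs_of_nonneg (hKpos t)]
      simp only [hK, pow_one]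
      rw [mul_assoc]
  have i2 : Integrable (fun t : ℝ => K t * t ^ 2) := by
    have : (fun t : ℝ => K t * t ^ 2)
        = fun t : ℝ => 1 / (2 * ε) * (Real.exp (-|t| / ε) * |t| ^ 2) := by
      funext t; rw [sq_abs]; simp only [hK]; ring
    rw [this]; exact (base 2).const_mul _
  have i3 : Integrable (fun t : ℝ => K t * t ^ 3) := by
    refine Integrable.mono' (((base 3).const_mul (1 / (2 * ε)))) ?_ ?_
    · exact (contK.mul (continuous_pow 3)).aestronglyMeasurable
    · refine Filter.Eventually.of_forall fun t => ?_
      rw [Real.norm_eq_abs, abs_mul, abs_of_nonneg (hKpos t), abs_pow]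
      simp only [hK]
      rw [mul_assoc]
  have i4 : Integrable (fun t : ℝ => K t * t ^ 4) := by
    have : (fun t : ℝ => K t * t ^ 4)
        = fun t : ℝ => 1 / (2 * ε) * (Real.exp (-|t| / ε) * |t| ^ 4) := by
      funext t
      rw [show |t| ^ 4 = t ^ 4 by rw [pow_abs, abs_of_nonneg (by positivity)]]
      simp only [hK]; ring
    rw [this]; exact (base 4).const_mul _
  have iP : Integrable (fun t : ℝ => K t * P t) := by
    have : (fun t : ℝ => K t * P t) = fun t : ℝ =>
        (r x) * K t + (-d1) * (K t * t) + (d2 / 2) * (K t * t ^ 2)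
          + (-d3 / 6) * (K t * t ^ 3) := by
      funext t; simp only [hP]; ring
    rw [this]
    exact (((i0.const_mul _).add (i1.const_mul _)).add (i2.const_mul _)).add (i3.const_mul _)
  have ig : Integrable (fun t : ℝ => K t * (r (x - t) - P t)) := by
    refine Integrable.mono' ((i4.const_mul (M₄ / 24))) ?_ ?_
    · refine (contK.mul ?_).aestronglyMeasurable
      refine Continuous.sub (contr.comp (continuous_const.sub continuous_id)) ?_
      simp only [hP]; fun_prop
    · refine Filter.Eventually.of_forall fun t => ?_
      rw [Real.norm_eq_abs, abs_mul, abs_of_nonneg (hKpos t)]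
      calc K t * |r (x - t) - P t| ≤ K t * (M₄ * t ^ 4 / 24) :=
            mul_le_mul_of_nonneg_left (htay t) (hKpos t)
        _ = M₄ / 24 * (K t * t ^ 4) := by ring
  -- moments
  have v0 : ∫ t : ℝ, K t = 1 := by
    have h := moment_even hε 0
    simp only [pow_zero, mul_one] at h
    rw [hK]
    rw [show (fun t : ℝ => 1 / (2 * ε) * Real.exp (-|t| / ε))
      = fun t : ℝ => 1 / (2 * ε) * (Real.exp (-|t| / ε) * |t| ^ 0) by funext t; simp]
    rw [integral_const_mul, moment_even hε 0]
    norm_num [Nat.factorial]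
    field_simp
  have v1 : ∫ t : ℝ, K t * t = 0 := by
    have : (fun t : ℝ => K t * t)
        = fun t : ℝ => 1 / (2 * ε) * (Real.exp (-|t| / ε) * t ^ 1) := by
      funext t; simp only [hK, pow_one]; ring
    rw [this, integral_const_mul, moment_odd (by decide : Odd 1), mul_zero]
  have v2 : ∫ t : ℝ, K t * t ^ 2 = 2 * ε ^ 2 := by
    have : (fun t : ℝ => K t * t ^ 2)
        = fun t : ℝ => 1 / (2 * ε) * (Real.exp (-|t| / ε) * |t| ^ 2) := by
      funext t; rw [sq_abs]; simp only [hK]; ring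
    rw [this, integral_const_mul, moment_even hε 2]
    norm_num [Nat.factorial]
    field_simp
  have v3 : ∫ t : ℝ, K t * t ^ 3 = 0 := by
    have : (fun t : ℝ => K t * t ^ 3)
        = fun t : ℝ => 1 / (2 * ε) * (Real.exp (-|t| / ε) * t ^ 3) := by
      funext t; simp only [hK]; ring
    rw [this, integral_const_mul, moment_odd (by decide : Odd 3), mul_zero]
  have v4 : ∫ t : ℝ, K t * t ^ 4 = 24 * ε ^ 4 := by
    have : (fun t : ℝ => K t * t ^ 4)
        = fun t : ℝ => 1 / (2 * ε) * (Real.exp (-|t| / ε) * |t| ^ 4) := by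
      funext t
      rw [show |t| ^ 4 = t ^ 4 by rw [pow_abs, abs_of_nonneg (by positivity)]]
      simp only [hK]; ring
    rw [this, integral_const_mul, moment_even hε 4]
    norm_num [Nat.factorial]
    field_simp
  -- value of the polynomial part
  have vP : ∫ t : ℝ, K t * P t = r x + ε ^ 2 * d2 := by
    have hexp : (fun t : ℝ => K t * P t) = fun t : ℝ =>
        (r x) * K t + (-d1) * (K t * t) + (d2 / 2) * (K t * t ^ 2)
          + (-d3 / 6) * (K t * t ^ 3) := by
      funext t; simp only [hP]; ring
    rw [hexp]
    rw [integral_add (f := fun t => r x * K t + -d1 * (K t * t) + d2 / 2 * (K t * t ^ 2))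
      (g := fun t => -d3 / 6 * (K t * t ^ 3))
      (((i0.const_mul _).add (i1.const_mul _)).add (i2.const_mul _)) (i3.const_mul _),
      integral_add (f := fun t => r x * K t + -d1 * (K t * t))
      (g := fun t => d2 / 2 * (K t * t ^ 2))
      ((i0.const_mul _).add (i1.const_mul _)) (i2.const_mul _),
      integral_add (f := fun t => r x * K t) (g := fun t => -d1 * (K t * t))
      (i0.const_mul _) (i1.const_mul _)]
    rw [show (∫ a : ℝ, r x * K a) = r x by rw [integral_const_mul, v0, mul_one]]
    rw [show (∫ a : ℝ, -d1 * (K a * a)) = 0 by rw [integral_const_mul, v1, mul_zero]]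
    rw [show (∫ a : ℝ, d2 / 2 * (K a * a ^ 2)) = d2 * ε ^ 2 by rw [integral_const_mul, v2]; ring]
    rw [show (∫ a : ℝ, -d3 / 6 * (K a * a ^ 3)) = 0 by rw [integral_const_mul, v3, mul_zero]]
    ring
  -- put it together
  have split : (∫ t : ℝ, K t * r (x - t))
      = (∫ t : ℝ, K t * P t) + ∫ t : ℝ, K t * (r (x - t) - P t) := by
    rw [← integral_add iP ig]
    congr 1
    funext t
    ring
  rw [hsub, split, vP]
  have : (r x + ε ^ 2 * d2 + (∫ t : ℝ, K t * (r (x - t) - P t)) - r x - ε ^ 2 * d2)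
      = ∫ t : ℝ, K t * (r (x - t) - P t) := by ring
  rw [this]
  calc |∫ t : ℝ, K t * (r (x - t) - P t)| ≤ ∫ t : ℝ, |K t * (r (x - t) - P t)| := by
        simpa [Real.norm_eq_abs, abs_mul] using
          norm_integral_le_integral_norm (μ := volume) (fun t : ℝ => K t * (r (x - t) - P t))
    _ ≤ ∫ t : ℝ, M₄ / 24 * (K t * t ^ 4) := by
        refine integral_mono ig.abs (i4.const_mul _) fun t => ?_
        rw [abs_mul, abs_of_nonneg (hKpos t)]
        calc K t * |r (x - t) - P t| ≤ K t * (M₄ * t ^ 4 / 24) :=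
              mul_le_mul_of_nonneg_left (htay t) (hKpos t)
          _ = M₄ / 24 * (K t * t ^ 4) := by ring
    _ = M₄ / 24 * (24 * ε ^ 4) := by rw [integral_const_mul, v4]
    _ = ε ^ 4 * M₄ := by ring
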